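/- Let I be an SPA-ST instance and J the IP model defined by constraints (1)–(7) with objective maximize Σ_{i,j} x_{ij}. Then the optimal objective value of J equals the cardinality of a maximum stable matching in I, and optimal solutions of J correspond exactly to maximum stable matchings of I. -/

import Mathlib

open scoped Classical
open Finset

/-- An instance of the Student-Project Allocation problem with lecturer
preferences over students, with ties (SPA-ST).  Preferences are encoded by
rank functions: a lower rank means more preferred; equal ranks encode ties. -/
structure SPAST (S P L : Type) where
  /-- the lecturer offering each project -/
  lec : P → L
  /-- project capacities -/
  cap : P → ℕ
  /-- lecturer capacities -/
  dcap : L → ℕ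
  /-- `acc s p` iff student `s` finds project `p` acceptable -/
  acc : S → P → Prop
  /-- student rank function (lower is better); meaningful on acceptable projects -/
  sRank : S → P → ℕ
  /-- lecturer rank function over students (lower is better) -/
  lRank : L → S → ℕ

variable {S P L : Type}

/-- students assigned to a project in `M` -/
noncomputable def projAssignees [Fintype S] (M : S → Option P) (p : P) : Finset S :=
  Finset.univ.filter (fun s => M s = some p)

/-- students assigned to some project of lecturer `k` in `M` -/
noncomputable def lecAssignees [Fintype S] (I : SPAST S P L) (M : S → Option P) (k : L) :
    Finset S :=
  Finset.univ.filter (fun s => ∃ p, M s = some p ∧ I.lec p = k)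

def IsMatching [Fintype S] (I : SPAST S P L) (M : S → Option P) : Prop :=
  (∀ s p, M s = some p → I.acc s p) ∧
  (∀ p, (projAssignees M p).card ≤ I.cap p) ∧
  (∀ k, (lecAssignees I M k).card ≤ I.dcap k)

def ProjFull [Fintype S] (I : SPAST S P L) (M : S → Option P) (p : P) : Prop :=
  (projAssignees M p).card = I.cap p

def LecFull [Fintype S] (I : SPAST S P L) (M : S → Option P) (k : L) : Prop :=
  (lecAssignees I M k).card = I.dcap k

/-- `s` finds `p` acceptable and is unassigned or strictly prefers `p` to `M(s)`. -/
def WantsToMove (I : SPAST S P L) (M : S → Option P) (s : S) (p : P) : Prop :=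
  I.acc s p ∧ (M s = none ∨ ∃ p', M s = some p' ∧ I.sRank s p < I.sRank s p')

/-- `(s, p)` is a blocking pair of `M`. -/
def Blocks [Fintype S] (I : SPAST S P L) (M : S → Option P) (s : S) (p : P) : Prop :=
  WantsToMove I M s p ∧
  ( (¬ ProjFull I M p ∧ ¬ LecFull I M (I.lec p)) ∨
    (¬ ProjFull I M p ∧ LecFull I M (I.lec p) ∧
      (s ∈ lecAssignees I M (I.lec p) ∨
       ∃ s' ∈ lecAssignees I M (I.lec p), I.lRank (I.lec p) s < I.lRank (I.lec p) s')) ∨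
    (ProjFull I M p ∧
       ∃ s' ∈ projAssignees M p, I.lRank (I.lec p) s < I.lRank (I.lec p) s') )

def Stable [Fintype S] (I : SPAST S P L) (M : S → Option P) : Prop :=
  IsMatching I M ∧ ∀ s p, ¬ Blocks I M s p

/-- the number of assigned agents in a matching -/
noncomputable def msize {A B : Type} [Fintype A] (M : A → Option B) : ℕ :=
  (Finset.univ.filter (fun a => (M a).isSome)).card

/-- Feasibility of `(x, a, b)` in the IP model `J` for MAX-SPA-ST: all variables
are binary, unacceptable pairs are forced to `0` (constraint 1), each student is
assigned at most once (2), project and lecturer capacities hold (3)–(4), and the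
stability constraints (5)–(7) hold, where `S_{ij}` is the set of projects ranked
by `s_i` at least as highly as `p_j`, `T_{ik}` the set of students other than
`s_i` ranked by `l_k` at least as highly as `s_i`, and `T_{ijk}` its subset of
students finding `p_j` acceptable. -/
def Feasible [Fintype S] [Fintype P] (I : SPAST S P L) (x a b : S → P → ℤ) : Prop :=
  (∀ s p, x s p = 0 ∨ x s p = 1) ∧
  (∀ s p, a s p = 0 ∨ a s p = 1) ∧
  (∀ s p, b s p = 0 ∨ b s p = 1) ∧
  -- (1)
  (∀ s p, ¬ I.acc s p → x s p = 0) ∧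
  -- (2)
  (∀ s, ∑ p, x s p ≤ 1) ∧
  -- (3)
  (∀ p, ∑ s, x s p ≤ (I.cap p : ℤ)) ∧
  -- (4)
  (∀ k, ∑ s, ∑ p ∈ Finset.univ.filter (fun p => I.lec p = k), x s p ≤ (I.dcap k : ℤ)) ∧
  -- (5)
  (∀ s p, I.acc s p →
    1 - ∑ r ∈ Finset.univ.filter (fun r => I.acc s r ∧ I.sRank s r ≤ I.sRank s p), x s r
      ≤ a s p + b s p) ∧
  -- (6)
  (∀ s p, I.acc s p →
    ∑ u ∈ Finset.univ.filter
        (fun u => I.lRank (I.lec p) u ≤ I.lRank (I.lec p) s ∧ u ≠ s),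
      ∑ r ∈ Finset.univ.filter (fun r => I.lec r = I.lec p), x u r
      ≥ (I.dcap (I.lec p) : ℤ) * a s p) ∧
  -- (7)
  (∀ s p, I.acc s p →
    ∑ u ∈ Finset.univ.filter
        (fun u => I.lRank (I.lec p) u ≤ I.lRank (I.lec p) s ∧ u ≠ s ∧ I.acc u p),
      x u p ≥ (I.cap p : ℤ) * b s p)

section Helpers
set_option linter.unusedSectionVars false

variable {S P L : Type} [Fintype S] [Fintype P]

lemma sum01 {A : Type} (t : Finset A) (f : A → ℤ) (h : ∀ a ∈ t, f a = 0 ∨ f a = 1) :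
    ∑ a ∈ t, f a = ((t.filter (fun a => f a = 1)).card : ℤ) := by
  classical
  rw [← Finset.sum_filter_add_sum_filter_not t (fun a => f a = 1)]
  have h1 : ∑ a ∈ t.filter (fun a => f a = 1), f a
      = ((t.filter (fun a => f a = 1)).card : ℤ) := by
    rw [Finset.sum_congr rfl (fun a ha => (Finset.mem_filter.mp ha).2)]
    simp
  have h2 : ∑ a ∈ t.filter (fun a => ¬ f a = 1), f a = 0 :=
    Finset.sum_eq_zero fun a ha => by
      rcases Finset.mem_filter.mp ha with ⟨hat, hne⟩
      rcases h a hat with h0 | h1'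
      · exact h0
      · exact absurd h1' hne
  rw [h1, h2, add_zero]

lemma sum01_nonneg {A : Type} (t : Finset A) (f : A → ℤ)
    (h : ∀ a ∈ t, f a = 0 ∨ f a = 1) : 0 ≤ ∑ a ∈ t, f a := by
  apply Finset.sum_nonneg
  intro a ha; rcases h a ha with h0 | h1 <;> omega

lemma x_unique (x : S → P → ℤ) (hx01 : ∀ s p, x s p = 0 ∨ x s p = 1)
    (hrow : ∀ s, ∑ p, x s p ≤ 1) {s : S} {p q : P}
    (hp : x s p = 1) (hq : x s q = 1) : p = q := by
  by_contra hne
  have hle : ∑ r ∈ ({p, q} : Finset P), x s r ≤ ∑ r, x s r :=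
    Finset.sum_le_sum_of_subset_of_nonneg (Finset.subset_univ _)
      (fun r _ _ => by rcases hx01 s r with h | h <;> omega)
  rw [Finset.sum_pair hne, hp, hq] at hle
  have := hrow s
  omega

lemma projAssignees_eq (x : S → P → ℤ) (M : S → Option P)
    (hM : ∀ s p, M s = some p ↔ x s p = 1) (p : P) :
    projAssignees M p = Finset.univ.filter (fun s => x s p = 1) := by
  ext s; simp [projAssignees, hM]

lemma col_sum (x : S → P → ℤ) (M : S → Option P)
    (hx01 : ∀ s p, x s p = 0 ∨ x s p = 1)
    (hM : ∀ s p, M s = some p ↔ x s p = 1) (p : P) :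
    ∑ s, x s p = ((projAssignees M p).card : ℤ) := by
  rw [projAssignees_eq x M hM]
  exact sum01 _ _ (fun s _ => hx01 s p)

lemma row_lec_sum (I : SPAST S P L) (x : S → P → ℤ) (M : S → Option P)
    (hx01 : ∀ s p, x s p = 0 ∨ x s p = 1)
    (hrow : ∀ s, ∑ p, x s p ≤ 1)
    (hM : ∀ s p, M s = some p ↔ x s p = 1) (s : S) (k : L) :
    (∑ p ∈ Finset.univ.filter (fun p => I.lec p = k), x s p)
      = if s ∈ lecAssignees I M k then 1 else 0 := by
  classical
  set t := Finset.univ.filter (fun p => I.lec p = k) with ht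
  have hsum : ∑ p ∈ t, x s p = ((t.filter (fun p => x s p = 1)).card : ℤ) :=
    sum01 _ _ (fun p _ => hx01 s p)
  have hle : ∑ p ∈ t, x s p ≤ 1 := by
    refine le_trans ?_ (hrow s)
    exact Finset.sum_le_sum_of_subset_of_nonneg (Finset.subset_univ _)
      (fun r _ _ => by rcases hx01 s r with h | h <;> omega)
  have hcard1 : (t.filter (fun p => x s p = 1)).card ≤ 1 := by
    rw [hsum] at hle; exact_mod_cast hle
  have hmem : s ∈ lecAssignees I M k ↔ (t.filter (fun p => x s p = 1)).Nonempty := by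
    constructor
    · intro hin
      obtain ⟨p, hp, hk⟩ := (Finset.mem_filter.mp hin).2
      exact ⟨p, Finset.mem_filter.mpr
        ⟨Finset.mem_filter.mpr ⟨Finset.mem_univ p, hk⟩, (hM s p).mp hp⟩⟩
    · rintro ⟨p, hp⟩
      obtain ⟨hpt, hx⟩ := Finset.mem_filter.mp hp
      obtain ⟨-, hk⟩ := Finset.mem_filter.mp hpt
      exact Finset.mem_filter.mpr ⟨Finset.mem_univ s, ⟨p, (hM s p).mpr hx, hk⟩⟩
  by_cases hin : s ∈ lecAssignees I M k
  · rw [if_pos hin, hsum]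
    have := Finset.card_pos.mpr (hmem.mp hin)
    have : (t.filter (fun p => x s p = 1)).card = 1 := by omega
    rw [this]; norm_num
  · rw [if_neg hin, hsum]
    have : (t.filter (fun p => x s p = 1)).card = 0 := by
      by_contra h
      exact hin (hmem.mpr (Finset.card_pos.mp (by omega)))
    rw [this]; norm_num

lemma lecAssignees_card (I : SPAST S P L) (x : S → P → ℤ) (M : S → Option P)
    (hx01 : ∀ s p, x s p = 0 ∨ x s p = 1)
    (hrow : ∀ s, ∑ p, x s p ≤ 1)
    (hM : ∀ s p, M s = some p ↔ x s p = 1) (k : L) :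
    ∑ s, ∑ p ∈ Finset.univ.filter (fun p => I.lec p = k), x s p
      = ((lecAssignees I M k).card : ℤ) := by
  rw [Finset.sum_congr rfl (fun s _ => row_lec_sum I x M hx01 hrow hM s k)]
  simp [Finset.sum_ite_mem]

lemma total_sum (x : S → P → ℤ) (M : S → Option P)
    (hx01 : ∀ s p, x s p = 0 ∨ x s p = 1)
    (hrow : ∀ s, ∑ p, x s p ≤ 1)
    (hM : ∀ s p, M s = some p ↔ x s p = 1) :
    ∑ s, ∑ p, x s p = (msize M : ℤ) := by
  classical
  have key : ∀ s, ∑ p, x s p = if (M s).isSome then 1 else 0 := by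
    intro s
    have hsum : ∑ p, x s p = ((Finset.univ.filter (fun p => x s p = 1)).card : ℤ) :=
      sum01 _ _ (fun p _ => hx01 s p)
    have hcard1 : (Finset.univ.filter (fun p => x s p = 1)).card ≤ 1 := by
      have := hrow s; rw [hsum] at this; exact_mod_cast this
    have hmem : (M s).isSome ↔ (Finset.univ.filter (fun p => x s p = 1)).Nonempty := by
      rw [Option.isSome_iff_exists]
      constructor
      · rintro ⟨p, hp⟩; exact ⟨p, Finset.mem_filter.mpr ⟨Finset.mem_univ p, (hM s p).mp hp⟩⟩
      · rintro ⟨p, hp⟩; exact ⟨p, (hM s p).mpr (Finset.mem_filter.mp hp).2⟩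
    by_cases hin : (M s).isSome
    · rw [if_pos hin, hsum]
      have := Finset.card_pos.mpr (hmem.mp hin)
      have h1 : (Finset.univ.filter (fun p => x s p = 1)).card = 1 := by omega
      rw [h1]; norm_num
    · rw [if_neg hin, hsum]
      have h0 : (Finset.univ.filter (fun p => x s p = 1)).card = 0 := by
        by_contra h
        exact hin (hmem.mpr (Finset.card_pos.mp (by omega)))
      rw [h0]; norm_num
  rw [Finset.sum_congr rfl (fun s _ => key s)]
  simp [msize, Finset.sum_ite_mem]

end Helpers
section LemA
set_option linter.unusedSectionVars false
set_option maxHeartbeats 1000000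
variable {S P L : Type} [Fintype S] [Fintype P]

lemma ite_sum_card {A : Type} (t u : Finset A) [DecidableEq A] :
    ∑ a ∈ t, (if a ∈ u then (1 : ℤ) else 0) = ((t ∩ u).card : ℤ) := by
  rw [Finset.sum_ite_mem]
  simp

lemma lemmaA (I : SPAST S P L) (x a b : S → P → ℤ) (M : S → Option P)
    (hF : Feasible I x a b)
    (hM : ∀ s p, M s = some p ↔ x s p = 1) :
    Stable I M ∧ (msize M : ℤ) = ∑ s, ∑ p, x s p := by
  classical
  obtain ⟨hx01, ha01, hb01, h1, h2, h3, h4, h5, h6, h7⟩ := hF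
  have hcapP : ∀ p, (projAssignees M p).card ≤ I.cap p := by
    intro p
    have := h3 p
    rw [col_sum x M hx01 hM p] at this
    exact_mod_cast this
  have hcapL : ∀ k, (lecAssignees I M k).card ≤ I.dcap k := by
    intro k
    have := h4 k
    rw [lecAssignees_card I x M hx01 h2 hM k] at this
    exact_mod_cast this
  have hmatch : IsMatching I M := by
    refine ⟨?_, hcapP, hcapL⟩
    intro s p hp
    by_contra hacc
    have := h1 s p hacc
    have := (hM s p).mp hp
    omega
  -- consequences of a s p = 1
  have subA : ∀ s p, I.acc s p → a s p = 1 →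
      LecFull I M (I.lec p) ∧
      ∀ u ∈ lecAssignees I M (I.lec p),
        I.lRank (I.lec p) u ≤ I.lRank (I.lec p) s ∧ u ≠ s := by
    intro s p hacc ha1
    have h6' := h6 s p hacc
    rw [ha1, mul_one] at h6'
    set k := I.lec p with hk
    set Tk := Finset.univ.filter
      (fun u => I.lRank k u ≤ I.lRank k s ∧ u ≠ s) with hTk
    set A := lecAssignees I M k with hA
    have hrw : ∀ u ∈ Tk, (∑ r ∈ Finset.univ.filter (fun r => I.lec r = k), x u r)
        = if u ∈ A then 1 else 0 :=
      fun u _ => row_lec_sum I x M hx01 h2 hM u k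
    rw [Finset.sum_congr rfl hrw, ite_sum_card] at h6'
    have hTA : I.dcap k ≤ (Tk ∩ A).card := by exact_mod_cast h6'
    have hsub : Tk ∩ A ⊆ A := Finset.inter_subset_right
    have hcards : (Tk ∩ A).card ≤ A.card := Finset.card_le_card hsub
    have hAd : A.card ≤ I.dcap k := hcapL k
    have hfull : A.card = I.dcap k := by omega
    have heq : Tk ∩ A = A :=
      Finset.eq_of_subset_of_card_le hsub (by omega)
    refine ⟨hfull, ?_⟩
    intro u hu
    have : u ∈ Tk := Finset.inter_subset_left (heq ▸ hu)
    exact (Finset.mem_filter.mp this).2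
  -- consequences of b s p = 1
  have subB : ∀ s p, I.acc s p → b s p = 1 →
      ProjFull I M p ∧
      ∀ u ∈ projAssignees M p,
        I.lRank (I.lec p) u ≤ I.lRank (I.lec p) s ∧ u ≠ s ∧ I.acc u p := by
    intro s p hacc hb1
    have h7' := h7 s p hacc
    rw [hb1, mul_one] at h7'
    set k := I.lec p with hk
    set Tk := Finset.univ.filter
      (fun u => I.lRank k u ≤ I.lRank k s ∧ u ≠ s ∧ I.acc u p) with hTk
    set A := projAssignees M p with hA
    have hsum : ∑ u ∈ Tk, x u p = ((Tk.filter (fun u => x u p = 1)).card : ℤ) :=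
      sum01 _ _ (fun u _ => hx01 u p)
    rw [hsum] at h7'
    have hsub : Tk.filter (fun u => x u p = 1) ⊆ A := by
      intro u hu
      have := (Finset.mem_filter.mp hu).2
      simp only [hA, projAssignees, Finset.mem_filter, Finset.mem_univ, true_and]
      exact (hM u p).mpr this
    have hTA : I.cap p ≤ (Tk.filter (fun u => x u p = 1)).card := by exact_mod_cast h7'
    have hcards := Finset.card_le_card hsub
    have hAd : A.card ≤ I.cap p := hcapP p
    have hfull : A.card = I.cap p := by omega
    have heq : Tk.filter (fun u => x u p = 1) = A :=
      Finset.eq_of_subset_of_card_le hsub (by omega)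
    refine ⟨hfull, ?_⟩
    intro u hu
    have : u ∈ Tk := Finset.filter_subset _ _ (heq ▸ hu)
    exact (Finset.mem_filter.mp this).2
  -- no blocking pairs
  have hstab : ∀ s p, ¬ Blocks I M s p := by
    intro s p hblk
    obtain ⟨⟨hacc, hwant⟩, hdisj⟩ := hblk
    have hS0 : ∑ r ∈ Finset.univ.filter
        (fun r => I.acc s r ∧ I.sRank s r ≤ I.sRank s p), x s r = 0 := by
      apply Finset.sum_eq_zero
      intro r hr
      rcases hx01 s r with h0 | h1'
      · exact h0
      · exfalso
        have hMr : M s = some r := (hM s r).mpr h1'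
        rcases hwant with hnone | ⟨p', hp', hlt⟩
        · rw [hnone] at hMr; exact nomatch hMr
        · rw [hp'] at hMr
          have : p' = r := Option.some.inj hMr
          subst this
          have := (Finset.mem_filter.mp hr).2.2
          omega
    have h5' := h5 s p hacc
    rw [hS0, sub_zero] at h5'
    have hab : a s p = 1 ∨ b s p = 1 := by
      rcases ha01 s p with h | h
      · rcases hb01 s p with h' | h'
        · omega
        · exact Or.inr h'
      · exact Or.inl h
    rcases hdisj with ⟨hnpf, hnlf⟩ | ⟨hnpf, hlf, hC⟩ | ⟨hpf, s', hs', hlt⟩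
    · rcases hab with ha1 | hb1
      · exact hnlf (subA s p hacc ha1).1
      · exact hnpf (subB s p hacc hb1).1
    · rcases hab with ha1 | hb1
      · obtain ⟨-, hall⟩ := subA s p hacc ha1
        rcases hC with hmem | ⟨s', hs', hlt⟩
        · exact (hall s hmem).2 rfl
        · have := (hall s' hs').1
          omega
      · exact hnpf (subB s p hacc hb1).1
    · rcases hab with ha1 | hb1
      · obtain ⟨-, hall⟩ := subA s p hacc ha1
        have hs'lec : s' ∈ lecAssignees I M (I.lec p) := by
          have := (Finset.mem_filter.mp hs').2
          exact Finset.mem_filter.mpr ⟨Finset.mem_univ s', ⟨p, this, rfl⟩⟩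
        have := (hall s' hs'lec).1
        omega
      · obtain ⟨-, hall⟩ := subB s p hacc hb1
        have := (hall s' hs').1
        omega
  exact ⟨⟨hmatch, hstab⟩, (total_sum x M hx01 h2 hM).symm⟩

end LemA
section LemB
set_option linter.unusedSectionVars false
set_option maxHeartbeats 1000000
variable {S P L : Type} [Fintype S] [Fintype P]

lemma existsM (x : S → P → ℤ) (hx01 : ∀ s p, x s p = 0 ∨ x s p = 1)
    (hrow : ∀ s, ∑ p, x s p ≤ 1) :
    ∃ M : S → Option P, ∀ s p, M s = some p ↔ x s p = 1 := by
  classical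
  refine ⟨fun s => if h : ∃ p, x s p = 1 then some h.choose else none, ?_⟩
  intro s p
  by_cases h : ∃ q, x s q = 1
  · simp only [dif_pos h, Option.some.injEq]
    constructor
    · rintro rfl; exact h.choose_spec
    · intro hp; exact x_unique x hx01 hrow h.choose_spec hp
  · simp only [dif_neg h]
    constructor
    · intro h'; exact nomatch h'
    · intro hp; exact absurd ⟨p, hp⟩ h

lemma lemmaB (I : SPAST S P L) (M : S → Option P) (hS : Stable I M) :
    ∃ x a b, Feasible I x a b ∧ ∑ s, ∑ p, x s p = (msize M : ℤ) ∧
      (∀ s p, M s = some p ↔ x s p = 1) := by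
  classical
  obtain ⟨⟨hacc, hcapP, hcapL⟩, hnoblk⟩ := hS
  set x : S → P → ℤ := fun s p => if M s = some p then 1 else 0 with hx
  set a : S → P → ℤ := fun s p =>
    if I.acc s p ∧ WantsToMove I M s p ∧ ¬ ProjFull I M p then 1 else 0 with ha
  set b : S → P → ℤ := fun s p =>
    if I.acc s p ∧ WantsToMove I M s p ∧ ProjFull I M p then 1 else 0 with hb
  have hM : ∀ s p, M s = some p ↔ x s p = 1 := by
    intro s p; simp only [hx]; split <;> simp_all
  have hx01 : ∀ s p, x s p = 0 ∨ x s p = 1 := by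
    intro s p; simp only [hx]; split <;> simp
  have ha01 : ∀ s p, a s p = 0 ∨ a s p = 1 := by
    intro s p; simp only [ha]; split <;> simp
  have hb01 : ∀ s p, b s p = 0 ∨ b s p = 1 := by
    intro s p; simp only [hb]; split <;> simp
  have hrow : ∀ s, ∑ p, x s p ≤ 1 := by
    intro s
    cases h : M s with
    | none => simp [hx, h]
    | some p0 =>
      have heq : ∀ p ∈ Finset.univ, x s p = if p0 = p then 1 else 0 := by
        intro p _; simp only [hx, h, Option.some.injEq]
      rw [Finset.sum_congr rfl heq]
      simp
  refine ⟨x, a, b, ⟨hx01, ha01, hb01, ?_, hrow, ?_, ?_, ?_, ?_, ?_⟩,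
    total_sum x M hx01 hrow hM, hM⟩
  · -- (1)
    intro s p hnacc
    rcases hx01 s p with h | h
    · exact h
    · exact absurd (hacc s p ((hM s p).mpr h)) hnacc
  · -- (3)
    intro p
    rw [col_sum x M hx01 hM p]
    exact_mod_cast hcapP p
  · -- (4)
    intro k
    rw [lecAssignees_card I x M hx01 hrow hM k]
    exact_mod_cast hcapL k
  · -- (5)
    intro s p haccsp
    by_cases hW : WantsToMove I M s p
    · have hab : a s p + b s p = 1 := by
        by_cases hPF : ProjFull I M p
        · simp [ha, hb, haccsp, hW, hPF]
        · simp [ha, hb, haccsp, hW, hPF]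
      have hnn : (0:ℤ) ≤ ∑ r ∈ Finset.univ.filter
          (fun r => I.acc s r ∧ I.sRank s r ≤ I.sRank s p), x s r :=
        sum01_nonneg _ _ (fun r _ => hx01 s r)
      omega
    · -- s is assigned to something at least as good
      have : ∃ p', M s = some p' ∧ I.sRank s p' ≤ I.sRank s p := by
        simp only [WantsToMove, not_and, not_or] at hW
        obtain ⟨h1', h2'⟩ := hW haccsp
        cases h : M s with
        | none => exact absurd h h1'
        | some p' =>
          refine ⟨p', rfl, ?_⟩
          by_contra hlt
          exact h2' ⟨p', h, by omega⟩
      obtain ⟨p', hp', hrk⟩ := this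
      have hmem : p' ∈ Finset.univ.filter
          (fun r => I.acc s r ∧ I.sRank s r ≤ I.sRank s p) :=
        Finset.mem_filter.mpr ⟨Finset.mem_univ _, hacc s p' hp', hrk⟩
      have h1' : (1:ℤ) ≤ ∑ r ∈ Finset.univ.filter
          (fun r => I.acc s r ∧ I.sRank s r ≤ I.sRank s p), x s r := by
        have hle := Finset.single_le_sum (f := fun r => x s r)
          (fun r _ => by rcases hx01 s r with h | h <;> simp [h]) hmem
        have hx1 : x s p' = 1 := (hM s p').mp hp'
        omega
      have hann : 0 ≤ a s p := by rcases ha01 s p with h | h <;> omega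
      have hbnn : 0 ≤ b s p := by rcases hb01 s p with h | h <;> omega
      omega
  · -- (6)
    intro s p haccsp
    rcases ha01 s p with h0 | h1
    · rw [h0, mul_zero]
      apply Finset.sum_nonneg
      intro u _
      exact sum01_nonneg _ _ (fun r _ => hx01 u r)
    · rw [h1, mul_one]
      have hcond : I.acc s p ∧ WantsToMove I M s p ∧ ¬ ProjFull I M p := by
        by_contra hc
        simp only [ha, if_neg hc] at h1
        omega
      obtain ⟨-, hW, hnPF⟩ := hcond
      have hnb := hnoblk s p
      simp only [Blocks, not_and, not_or] at hnb
      have hnb' := hnb ⟨haccsp, hW.2⟩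
      obtain ⟨hd1, hd2, hd3⟩ := hnb'
      have hLF : LecFull I M (I.lec p) := not_not.mp (hd1 hnPF)
      obtain ⟨hs_not, hnex⟩ := hd2 hnPF hLF
      push_neg at hnex
      have hrank : ∀ s' ∈ lecAssignees I M (I.lec p),
          I.lRank (I.lec p) s' ≤ I.lRank (I.lec p) s := hnex
      set k := I.lec p with hk
      set Tk := Finset.univ.filter
        (fun u => I.lRank k u ≤ I.lRank k s ∧ u ≠ s) with hTk
      have hsub : lecAssignees I M k ⊆ Tk := by
        intro u hu
        refine Finset.mem_filter.mpr ⟨Finset.mem_univ u, hrank u hu, ?_⟩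
        rintro rfl
        exact hs_not hu
      have hge : ∑ u ∈ Tk, ∑ r ∈ Finset.univ.filter (fun r => I.lec r = k), x u r
          ≥ ∑ u ∈ lecAssignees I M k,
              ∑ r ∈ Finset.univ.filter (fun r => I.lec r = k), x u r := by
        apply Finset.sum_le_sum_of_subset_of_nonneg hsub
        intro u _ _
        exact sum01_nonneg _ _ (fun r _ => hx01 u r)
      have heach : ∀ u ∈ lecAssignees I M k,
          ∑ r ∈ Finset.univ.filter (fun r => I.lec r = k), x u r = 1 := by
        intro u hu
        rw [row_lec_sum I x M hx01 hrow hM u k, if_pos hu]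
      have hsum : ∑ u ∈ lecAssignees I M k,
          ∑ r ∈ Finset.univ.filter (fun r => I.lec r = k), x u r
          = ((lecAssignees I M k).card : ℤ) := by
        rw [Finset.sum_congr rfl heach]
        simp
      rw [hsum] at hge
      have : (lecAssignees I M k).card = I.dcap k := hLF
      rw [this] at hge
      exact hge
  · -- (7)
    intro s p haccsp
    rcases hb01 s p with h0 | h1
    · rw [h0, mul_zero]
      exact sum01_nonneg _ _ (fun u _ => hx01 u p)
    · rw [h1, mul_one]
      have hcond : I.acc s p ∧ WantsToMove I M s p ∧ ProjFull I M p := by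
        by_contra hc
        simp only [hb, if_neg hc] at h1
        omega
      obtain ⟨-, hW, hPF⟩ := hcond
      have hnb := hnoblk s p
      simp only [Blocks, not_and, not_or] at hnb
      have hnb' := hnb ⟨haccsp, hW.2⟩
      obtain ⟨hd1, hd2, hd3⟩ := hnb'
      have hnex := hd3 hPF
      push_neg at hnex
      have hrank : ∀ s' ∈ projAssignees M p,
          I.lRank (I.lec p) s' ≤ I.lRank (I.lec p) s := hnex
      set k := I.lec p with hk
      set Tk := Finset.univ.filter
        (fun u => I.lRank k u ≤ I.lRank k s ∧ u ≠ s ∧ I.acc u p) with hTk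
      have hsub : projAssignees M p ⊆ Tk := by
        intro u hu
        have hup : M u = some p := (Finset.mem_filter.mp hu).2
        have hne : u ≠ s := by
          rintro rfl
          rcases hW.2 with hnone | ⟨p', hp', hlt⟩
          · rw [hnone] at hup; exact nomatch hup
          · rw [hp'] at hup
            have hpe : p' = p := Option.some.inj hup
            subst hpe
            omega
        exact Finset.mem_filter.mpr
          ⟨Finset.mem_univ u, hrank u hu, hne, hacc u p hup⟩
      have hge : ∑ u ∈ Tk, x u p ≥ ∑ u ∈ projAssignees M p, x u p := by
        apply Finset.sum_le_sum_of_subset_of_nonneg hsub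
        intro u _ _
        rcases hx01 u p with h | h <;> omega
      have hsum : ∑ u ∈ projAssignees M p, x u p = ((projAssignees M p).card : ℤ) := by
        have hone : ∀ u ∈ projAssignees M p, x u p = 1 :=
          fun u hu => (hM u p).mp (Finset.mem_filter.mp hu).2
        rw [Finset.sum_congr rfl hone]
        simp
      rw [hsum] at hge
      have : (projAssignees M p).card = I.cap p := hPF
      rw [this] at hge
      exact hge

end LemB
section Main
set_option linter.unusedSectionVars false
variable {S P L : Type} [Fintype S] [Fintype P]

lemma set_eq (I : SPAST S P L) :
    {m : ℤ | ∃ x a b, Feasible I x a b ∧ ∑ s, ∑ p, x s p = m}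
      = {m : ℤ | ∃ M : S → Option P, Stable I M ∧ (msize M : ℤ) = m} := by
  ext m
  constructor
  · rintro ⟨x, a, b, hF, rfl⟩
    obtain ⟨M, hM⟩ := existsM x hF.1 hF.2.2.2.2.1
    obtain ⟨hS, hsz⟩ := lemmaA I x a b M hF hM
    exact ⟨M, hS, hsz⟩
  · rintro ⟨M, hS, rfl⟩
    obtain ⟨x, a, b, hF, hsum, -⟩ := lemmaB I M hS
    exact ⟨x, a, b, hF, hsum⟩
end Main
/-- The optimal objective value of the IP model `J` (maximising
`Σ_{i,j} x_{ij}`) equals the cardinality of a maximum stable matching of `I`,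
and optimal solutions of `J` correspond exactly to maximum stable matchings. -/
theorem stmt8 [Fintype S] [Fintype P] (I : SPAST S P L) :
    (∀ n : ℤ,
      IsGreatest {m : ℤ | ∃ x a b, Feasible I x a b ∧ ∑ s, ∑ p, x s p = m} n ↔
      IsGreatest {m : ℤ | ∃ M : S → Option P, Stable I M ∧ (msize M : ℤ) = m} n) ∧
    (∀ (x a b : S → P → ℤ) (M : S → Option P),
      Feasible I x a b → (∀ s p, M s = some p ↔ x s p = 1) →
      (IsGreatest {m : ℤ | ∃ x' a' b', Feasible I x' a' b' ∧ ∑ s, ∑ p, x' s p = m}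
          (∑ s, ∑ p, x s p) ↔
        (Stable I M ∧ ∀ N : S → Option P, Stable I N → msize N ≤ msize M))) := by
  constructor
  · intro n
    rw [set_eq I]
  · intro x a b M hF hM
    obtain ⟨hS, hsz⟩ := lemmaA I x a b M hF hM
    constructor
    · intro hG
      refine ⟨hS, ?_⟩
      intro N hN
      obtain ⟨x', a', b', hF', hsum', -⟩ := lemmaB I N hN
      have hmem : (msize N : ℤ) ∈
          {m : ℤ | ∃ x' a' b', Feasible I x' a' b' ∧ ∑ s, ∑ p, x' s p = m} :=
        ⟨x', a', b', hF', hsum'⟩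
      have := hG.2 hmem
      rw [← hsz] at this
      exact_mod_cast this
    · rintro ⟨-, hmax⟩
      constructor
      · exact ⟨x, a, b, hF, rfl⟩
      · rintro m ⟨x', a', b', hF', rfl⟩
        obtain ⟨M', hM'⟩ := existsM x' hF'.1 hF'.2.2.2.2.1
        obtain ⟨hS', hsz'⟩ := lemmaA I x' a' b' M' hF' hM'
        have := hmax M' hS'
        rw [← hsz, ← hsz']
        exact_mod_cast this
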